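/- Let p be a prime and let k be a commutative ring of characteristic p. For a polynomial f in two variables u, v over k, write f = Σ_{i,j} α_{i,j} u^i v^j. Then applying the partial derivative operator ∂^{2p-2}/∂u^{p-1}∂v^{p-1} (i.e. the (p-1)-fold iterate of ∂/∂u followed by the (p-1)-fold iterate of ∂/∂v) to f yields Σ_{i,j} α_{ip+p-1, jp+p-1} u^{ip} v^{jp}. -/

import Mathlib

open MvPolynomial Finset

lemma coeff_pderiv' {k : Type*} [CommRing k] (i : Fin 2) (f : MvPolynomial (Fin 2) k)
    (m : Fin 2 →₀ ℕ) :
    coeff m (pderiv i f) = ((m i + 1 : ℕ) : k) * coeff (m + Finsupp.single i 1) f := by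
  induction f using MvPolynomial.induction_on' with
  | monomial s a =>
    rw [pderiv_monomial, coeff_monomial, coeff_monomial]
    by_cases h : s = m + Finsupp.single i 1
    · subst h
      rw [if_pos (add_tsub_cancel_right _ _), if_pos rfl]
      simp [mul_comm]
    · rw [if_neg h, mul_zero]
      by_cases hs : s - Finsupp.single i 1 = m
      · by_cases hsi : s i = 0
        · simp [hsi]
        · exact absurd (by rw [← hs, tsub_add_cancel_of_le
            (Finsupp.single_le_iff.mpr (Nat.one_le_iff_ne_zero.mpr hsi))]) h
      · rw [if_neg hs]
  | add f g hf hg => simp [hf, hg, mul_add]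

lemma coeff_pderiv_iterate {k : Type*} [CommRing k] (i : Fin 2) (n : ℕ)
    (f : MvPolynomial (Fin 2) k) (m : Fin 2 →₀ ℕ) :
    coeff m ((fun g => pderiv i g)^[n] f) =
      ((∏ j ∈ range n, (m i + 1 + j) : ℕ) : k) * coeff (m + Finsupp.single i n) f := by
  induction n generalizing m with
  | zero => simp
  | succ n ih =>
    rw [Function.iterate_succ_apply', coeff_pderiv', ih, add_assoc, ← Finsupp.single_add, Nat.add_comm 1 n,
      ← mul_assoc, ← Nat.cast_mul]
    congr 2
    rw [Finset.prod_range_succ', mul_comm]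
    congr 1
    exact Finset.prod_congr rfl fun j _ => by
      simp [Finsupp.add_apply]; omega

lemma prod_zmod (p : ℕ) (hp : p.Prime) (m : ℕ) :
    ((∏ j ∈ range (p - 1), (m + 1 + j) : ℕ) : ZMod p) = if p ∣ m then -1 else 0 := by
  haveI : Fact p.Prime := ⟨hp⟩
  rw [Nat.cast_prod]
  by_cases h : p ∣ m
  · rw [if_pos h]
    have hm : (m : ZMod p) = 0 := (ZMod.natCast_eq_zero_iff m p).mpr h
    calc ∏ j ∈ range (p - 1), ((m + 1 + j : ℕ) : ZMod p)
        = ∏ j ∈ range (p - 1), ((j + 1 : ℕ) : ZMod p) := by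
          refine Finset.prod_congr rfl fun j _ => ?_
          push_cast [hm]; ring
      _ = ((Nat.factorial (p - 1) : ℕ) : ZMod p) := by
          rw [← Finset.prod_range_add_one_eq_factorial, Nat.cast_prod]
      _ = -1 := ZMod.wilsons_lemma p
  · rw [if_neg h]
    have hp1 : 1 ≤ m % p := by
      rcases Nat.eq_zero_or_pos (m % p) with h0 | h0
      · exact absurd (Nat.dvd_of_mod_eq_zero h0) h
      · exact h0
    have hlt : m % p < p := Nat.mod_lt m hp.pos
    refine Finset.prod_eq_zero (i := p - 1 - m % p) (Finset.mem_range.mpr (by omega)) ?_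
    have hmd := Nat.mod_add_div m p
    have : m + 1 + (p - 1 - m % p) = p * (m / p) + p := by omega
    rw [this]
    push_cast
    simp

theorem stmt0 (p : ℕ) (hp : p.Prime) (k : Type*) [CommRing k] [CharP k p]
    (f : MvPolynomial (Fin 2) k) (m : Fin 2 →₀ ℕ) :
    coeff m
      ((fun g => pderiv (1 : Fin 2) g)^[p - 1]
        ((fun g => pderiv (0 : Fin 2) g)^[p - 1] f)) =
      if p ∣ m 0 ∧ p ∣ m 1 then
        coeff (m + (Finsupp.single 0 (p - 1) + Finsupp.single 1 (p - 1))) f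
      else 0 := by
  haveI : Fact p.Prime := ⟨hp⟩
  rw [coeff_pderiv_iterate, coeff_pderiv_iterate]
  have h0 : (m + Finsupp.single 1 (p - 1) : Fin 2 →₀ ℕ) (0 : Fin 2) = m 0 := by
    simp [Finsupp.add_apply, Finsupp.single_apply]
  have hidx : m + Finsupp.single 1 (p - 1) + Finsupp.single 0 (p - 1) =
      m + (Finsupp.single 0 (p - 1) + Finsupp.single 1 (p - 1)) := by
    rw [add_assoc, add_comm (Finsupp.single 1 (p-1))]
  rw [h0, hidx]
  set φ := ZMod.castHom (dvd_refl p) k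
  rw [← map_natCast φ (∏ j ∈ range (p - 1), (m 1 + 1 + j)),
      ← map_natCast φ (∏ j ∈ range (p - 1), (m 0 + 1 + j)),
      prod_zmod p hp, prod_zmod p hp]
  by_cases ha : p ∣ m 0 <;> by_cases hb : p ∣ m 1 <;>
    simp [ha, hb]
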